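/- Let f_n = Σ_{k=0}^{n} binom(n,k)³ be the Franel numbers and, for integers n ≥ 2, set F(n) = (−1)ⁿ·f_n/(n(n−1)) ∈ ℚ. Then for all integers n ≥ 2, (2 − 3n)·F(n) = G(n+1) − G(n), where G(n) = (8n³ − 5n − 2)·F(n) + (n+1)³·F(n+1). In particular (2−3n)F(n) is summable. -/

import Mathlib

open Finset

/-- The Franel numbers `f(n) = ∑_{k=0}^n binom(n,k)³`. -/
def franel (n : ℕ) : ℕ := ∑ k ∈ Finset.range (n + 1), (n.choose k) ^ 3

/-- `F(n) = (-1)ⁿ f(n)/(n(n-1))` for the Franel numbers `f(n)`. -/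
noncomputable def franelF (n : ℕ) : ℚ :=
  (-1 : ℚ) ^ n * (franel n : ℚ) / ((n : ℚ) * ((n : ℚ) - 1))

/-- `G(n) = (8n³ - 5n - 2)·F(n) + (n+1)³·F(n+1)`. -/
noncomputable def franelG (n : ℕ) : ℚ :=
  (8 * (n : ℚ) ^ 3 - 5 * (n : ℚ) - 2) * franelF n + ((n : ℚ) + 1) ^ 3 * franelF (n + 1)

/-- The Zeilberger certificate polynomial for the Franel recurrence. -/
def Npoly (n k : ℚ) : ℚ :=
  -72 + 78*k - 30*k^2 + 4*k^3 + n*(-272 + 249*k - 78*k^2 + 8*k^3)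
  + n^2*(-402 + 291*k - 66*k^2 + 4*k^3) + n^3*(-290 + 147*k - 18*k^2)
  + n^4*(-102 + 27*k) - 14*n^5

lemma cast1 (n k : ℕ) :
    ((k : ℚ) + 1) * ((n+1).choose (k+1) : ℚ) = ((n : ℚ) + 1 - k) * ((n+1).choose k : ℚ) := by
  rcases le_or_gt k (n+1) with h | h
  · have := Nat.choose_succ_right_eq (n+1) k
    have hc : (((n+1).choose (k+1) * (k+1) : ℕ) : ℚ) = (((n+1).choose k * (n+1-k) : ℕ) : ℚ) := by
      exact_mod_cast congrArg (Nat.cast (R := ℚ)) this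
    push_cast [Nat.cast_sub h] at hc
    linarith [hc]
  · have h1 : (n+1).choose (k+1) = 0 := Nat.choose_eq_zero_of_lt (by omega)
    have h2 : (n+1).choose k = 0 := Nat.choose_eq_zero_of_lt h
    simp [h1, h2]

lemma cast2 (n k : ℕ) :
    ((n : ℚ) + 1) * (n.choose (k+1) : ℚ) = ((n : ℚ) - k) * ((n+1).choose (k+1) : ℚ) := by
  rcases le_or_gt (k+1) (n+1) with h | h
  · have := Nat.choose_succ_right_eq (n+1) k
    -- use choose_mul_succ_eq : n.choose k * (n + 1) = (n+1).choose k * (n + 1 - k)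
    have h2 := Nat.choose_mul_succ_eq n (k+1)
    have hc : ((n.choose (k+1) * (n+1) : ℕ) : ℚ) = (((n+1).choose (k+1) * (n+1-(k+1)) : ℕ) : ℚ) := by
      exact_mod_cast congrArg (Nat.cast (R := ℚ)) h2
    have h' : k ≤ n := by omega
    push_cast [Nat.cast_sub h'] at hc
    linarith [hc]
  · have h1 : n.choose (k+1) = 0 := Nat.choose_eq_zero_of_lt (by omega)
    have h2 : (n+1).choose (k+1) = 0 := Nat.choose_eq_zero_of_lt h
    simp [h1, h2]

lemma step (n k : ℕ) :
    ((n:ℚ)+2)^2 * (((n+2).choose (k+1) : ℚ))^3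
      - (7*(n:ℚ)^2+21*(n:ℚ)+16) * (((n+1).choose (k+1) : ℚ))^3
      - 8*((n:ℚ)+1)^2 * ((n.choose (k+1) : ℚ))^3
    = (Npoly n (k+2) * (((n+1).choose (k+1) : ℚ))^3
        - Npoly n (k+1) * (((n+1).choose k : ℚ))^3) / ((n:ℚ)+1)^3 := by
  have hk : ((k:ℚ)+1) ≠ 0 := by positivity
  have hn : ((n:ℚ)+1) ≠ 0 := by positivity
  have hp : (((n+2).choose (k+1) : ℚ)) = ((n+1).choose k : ℚ) + ((n+1).choose (k+1) : ℚ) := by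
    rw [show n+2 = (n+1)+1 from rfl, Nat.choose_succ_succ]
    push_cast; ring
  have hc : ((n.choose (k+1) : ℚ)) = ((n:ℚ) - k) * ((n+1).choose (k+1) : ℚ) / ((n:ℚ)+1) := by
    field_simp
    linear_combination cast2 n k
  have ha : (((n+1).choose (k+1) : ℚ)) = ((n:ℚ)+1-k) * ((n+1).choose k : ℚ) / ((k:ℚ)+1) := by
    field_simp
    linear_combination cast1 n k
  rw [hp, hc, ha]
  simp only [Npoly]
  field_simp
  ring

lemma franel_rec (n : ℕ) :
    ((n:ℚ)+2)^2 * (franel (n+2) : ℚ)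
      = (7*(n:ℚ)^2+21*(n:ℚ)+16) * (franel (n+1) : ℚ) + 8*((n:ℚ)+1)^2 * (franel n : ℚ) := by
  have hf : ∀ m : ℕ, (franel m : ℚ) = ∑ k ∈ Finset.range (m+1), ((m.choose k : ℚ))^3 := by
    intro m; simp [franel]
  -- extend sums to range (n+3)
  have hf1 : (franel (n+1) : ℚ) = ∑ k ∈ Finset.range (n+3), (((n+1).choose k : ℚ))^3 := by
    rw [hf, Finset.sum_range_succ (n := n+2)]
    simp [Nat.choose_eq_zero_of_lt]
  have hf0 : (franel n : ℚ) = ∑ k ∈ Finset.range (n+3), ((n.choose k : ℚ))^3 := by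
    rw [hf, Finset.sum_range_succ (n := n+2), Finset.sum_range_succ (n := n+1)]
    simp [Nat.choose_eq_zero_of_lt]
  have hf2 : (franel (n+2) : ℚ) = ∑ k ∈ Finset.range (n+3), (((n+2).choose k : ℚ))^3 := hf (n+2)
  rw [hf2, hf1, hf0, Finset.mul_sum, Finset.mul_sum, Finset.mul_sum, ← Finset.sum_add_distrib,
    ← sub_eq_zero, ← Finset.sum_sub_distrib]
  set Gf : ℕ → ℚ := fun j =>
    match j with
    | 0 => 0
    | (j+1) => Npoly n (j+1) * (((n+1).choose j : ℚ))^3 / ((n:ℚ)+1)^3 with hGf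
  have key : ∀ k, ((n:ℚ)+2)^2 * (((n+2).choose k : ℚ))^3
      - ((7*(n:ℚ)^2+21*(n:ℚ)+16) * (((n+1).choose k : ℚ))^3
        + 8*((n:ℚ)+1)^2 * ((n.choose k : ℚ))^3) = Gf (k+1) - Gf k := by
    intro k
    cases k with
    | zero =>
        simp only [hGf, Nat.choose_zero_right, Npoly]
        have hn : ((n:ℚ)+1) ≠ 0 := by positivity
        push_cast
        field_simp
        ring
    | succ j =>
        have := step n j
        simp only [hGf]
        push_cast at this ⊢
        rw [show ((n:ℚ)+2)^2 * (((n+2).choose (j+1) : ℚ))^3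
            - ((7*(n:ℚ)^2+21*(n:ℚ)+16) * (((n+1).choose (j+1) : ℚ))^3
              + 8*((n:ℚ)+1)^2 * ((n.choose (j+1) : ℚ))^3)
          = ((n:ℚ)+2)^2 * (((n+2).choose (j+1) : ℚ))^3
            - (7*(n:ℚ)^2+21*(n:ℚ)+16) * (((n+1).choose (j+1) : ℚ))^3
            - 8*((n:ℚ)+1)^2 * ((n.choose (j+1) : ℚ))^3 from by ring, this]
        push_cast
        ring
  calc ∑ k ∈ Finset.range (n+3),
        (((n:ℚ)+2)^2 * (((n+2).choose k : ℚ))^3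
          - ((7*(n:ℚ)^2+21*(n:ℚ)+16) * (((n+1).choose k : ℚ))^3
            + 8*((n:ℚ)+1)^2 * ((n.choose k : ℚ))^3))
      = ∑ k ∈ Finset.range (n+3), (Gf (k+1) - Gf k) := by
        exact Finset.sum_congr rfl fun k _ => key k
    _ = Gf (n+3) - Gf 0 := Finset.sum_range_sub Gf (n+3)
    _ = 0 := by
        have hz : (n+1).choose (n+2) = 0 := Nat.choose_eq_zero_of_lt (by omega)
        simp [hGf, hz]

lemma aux_franel (x s f0 f1 f2 : ℚ) (h0 : x ≠ 0) (hm1 : x - 1 ≠ 0) (hp1 : x + 1 ≠ 0)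
    (hp2 : x + 2 ≠ 0)
    (hrec : (x+2)^2 * f2 = (7*x^2+21*x+16) * f1 + 8*(x+1)^2 * f0) :
    (2 - 3*x) * (s * f0 / (x * (x-1)))
      = ((8*(x+1)^3 - 5*(x+1) - 2) * (-(s) * f1 / ((x+1)*x))
          + ((x+1)+1)^3 * (s * f2 / (((x+2))*((x+1)))))
        - ((8*x^3 - 5*x - 2) * (s * f0 / (x*(x-1))) + (x+1)^3 * (-(s) * f1 / ((x+1)*x))) := by
  have hf2 : f2 = ((7*x^2+21*x+16) * f1 + 8*(x+1)^2 * f0) / (x+2)^2 := by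
    rw [eq_div_iff (pow_ne_zero 2 hp2)]; linear_combination hrec
  rw [hf2]
  field_simp
  ring

theorem franel_telescoping (n : ℕ) (hn : 2 ≤ n) :
    (2 - 3 * (n : ℚ)) * franelF n = franelG (n + 1) - franelG n := by
  have h2 : (2:ℚ) ≤ (n:ℚ) := by exact_mod_cast hn
  have h0 : (n:ℚ) ≠ 0 := by linarith
  have hm1 : (n:ℚ) - 1 ≠ 0 := by intro h; linarith
  have hp1 : (n:ℚ) + 1 ≠ 0 := by linarith
  have hp2 : (n:ℚ) + 2 ≠ 0 := by linarith
  have hrec := franel_rec n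
  have hs1 : (-1:ℚ)^(n+1) = -(-1:ℚ)^n := by rw [pow_succ]; ring
  have hs2 : (-1:ℚ)^(n+2) = (-1:ℚ)^n := by rw [pow_add]; ring
  simp only [franelG, franelF]
  rw [show n+1+1 = n+2 from rfl]
  push_cast
  rw [hs1, hs2]
  linear_combination aux_franel (n:ℚ) ((-1:ℚ)^n) (franel n) (franel (n+1)) (franel (n+2))
    h0 hm1 hp1 hp2 hrec
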